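/- The generalized Poisson kernel k^s(x,t) = t^s/(|x|²+t²)^{(n+s)/2}, s ∈ (0,2), is s-harmonic on the upper half-space: div(t^{1−s} ∇_{(x,t)} k^s) = 0 on ℝ^{n+1}_+. -/

import Mathlib

open Real

noncomputable section

/-- The generalized Poisson kernel `k^s(x,t) = t^s/(|x|²+t²)^((n+s)/2)` on `ℝ^{n+1}_+`. -/
def genPoissonKernel (n : ℕ) (s : ℝ) (x : EuclideanSpace ℝ (Fin n)) (t : ℝ) : ℝ :=
  t ^ s / (‖x‖ ^ 2 + t ^ 2) ^ (((n : ℝ) + s) / 2)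

private lemma gpk_sq_pos (n : ℕ) (x : EuclideanSpace ℝ (Fin n)) {t : ℝ} (ht : 0 < t) :
    (0:ℝ) < ‖x‖ ^ 2 + t ^ 2 := by positivity

/-- spatial first derivative -/
private lemma gpk_hasFDerivAt (n : ℕ) (s : ℝ) {t : ℝ} (ht : 0 < t)
    (z : EuclideanSpace ℝ (Fin n)) :
    HasFDerivAt (fun y : EuclideanSpace ℝ (Fin n) => genPoissonKernel n s y t)
      ((t ^ s * (-(((n:ℝ) + s) / 2) *
          (‖z‖ ^ 2 + t ^ 2) ^ (-(((n:ℝ) + s) / 2) - 1))) • ((2:ℕ) • innerSL ℝ z)) z := by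
  have hfun : (fun y : EuclideanSpace ℝ (Fin n) => genPoissonKernel n s y t)
      = fun y => t ^ s * (‖y‖ ^ 2 + t ^ 2) ^ (-(((n:ℝ) + s) / 2)) := by
    funext y
    rw [genPoissonKernel, Real.rpow_neg (by positivity), div_eq_mul_inv]
  rw [hfun]
  have hR : HasFDerivAt (fun y : EuclideanSpace ℝ (Fin n) => ‖y‖ ^ 2 + t ^ 2)
      ((2:ℕ) • innerSL ℝ z) z := by
    simpa using ((hasFDerivAt_id z).norm_sq).add_const (t ^ 2)
  have hg := (Real.hasDerivAt_rpow_const (x := ‖z‖ ^ 2 + t ^ 2)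
      (p := -(((n:ℝ) + s) / 2)) (Or.inl (gpk_sq_pos n z ht).ne')).const_mul (t ^ s)
  have hc := hg.comp_hasFDerivAt z hR
  exact hc

/-- The generalized Poisson kernel is `s`-harmonic on the upper half-space:
`t^{1−s} Δ_x k^s + ∂_t(t^{1−s} ∂_t k^s) = 0`, i.e. `div(t^{1−s} ∇_{(x,t)} k^s) = 0`. -/
theorem genPoissonKernel_s_harmonic (n : ℕ) (s : ℝ) (hs0 : 0 < s) (hs2 : s < 2)
    (x : EuclideanSpace ℝ (Fin n)) (t : ℝ) (ht : 0 < t) :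
    t ^ (1 - s) *
        (∑ i : Fin n,
          fderiv ℝ (fun z => fderiv ℝ (fun y => genPoissonKernel n s y t) z
              (EuclideanSpace.single i 1)) x (EuclideanSpace.single i 1))
      + deriv (fun τ : ℝ => τ ^ (1 - s) * deriv (fun σ => genPoissonKernel n s x σ) τ) t
      = 0 := by
  set α : ℝ := ((n:ℝ) + s) / 2 with hα
  have hR0 : (0:ℝ) < ‖x‖ ^ 2 + t ^ 2 := gpk_sq_pos n x ht
  set A : ℝ := (‖x‖ ^ 2 + t ^ 2) ^ (-α - 1) with hA
  set B : ℝ := (‖x‖ ^ 2 + t ^ 2) ^ (-α - 1 - 1) with hB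
  have hAB : A = B * (‖x‖ ^ 2 + t ^ 2) := by
    have h : (-α - 1 - 1) + (1:ℝ) = -α - 1 := by ring
    calc A = (‖x‖ ^ 2 + t ^ 2) ^ ((-α - 1 - 1) + (1:ℝ)) := by rw [hA, h]
      _ = B * (‖x‖ ^ 2 + t ^ 2) := by rw [Real.rpow_add hR0, Real.rpow_one, hB]
  have hts : t ^ (1 - s) * t ^ s = t := by
    rw [← Real.rpow_add ht]; norm_num
  -- spatial part
  have hform : ∀ i : Fin n,
      (fun z : EuclideanSpace ℝ (Fin n) =>
          fderiv ℝ (fun y => genPoissonKernel n s y t) z (EuclideanSpace.single i 1))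
      = fun z => (-2 * α * t ^ s) * ((‖z‖ ^ 2 + t ^ 2) ^ (-α - 1) * z i) := by
    intro i
    funext z
    rw [(gpk_hasFDerivAt n s ht z).fderiv]
    simp [EuclideanSpace.inner_single_right]
    ring
  have hterm : ∀ i : Fin n,
      fderiv ℝ (fun z => fderiv ℝ (fun y => genPoissonKernel n s y t) z
          (EuclideanSpace.single i 1)) x (EuclideanSpace.single i 1)
      = (-2 * α * t ^ s) * (A + x i * ((-α - 1) * B * (2 * x i))) := by
    intro i
    rw [hform i]
    have hC : HasFDerivAt (fun z : EuclideanSpace ℝ (Fin n) => (‖z‖ ^ 2 + t ^ 2) ^ (-α - 1))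
        (((-α - 1) * (‖x‖ ^ 2 + t ^ 2) ^ (-α - 1 - 1)) • ((2:ℕ) • innerSL ℝ x)) x := by
      have hR : HasFDerivAt (fun y : EuclideanSpace ℝ (Fin n) => ‖y‖ ^ 2 + t ^ 2)
          ((2:ℕ) • innerSL ℝ x) x := by
        simpa using ((hasFDerivAt_id x).norm_sq).add_const (t ^ 2)
      exact (Real.hasDerivAt_rpow_const (x := ‖x‖ ^ 2 + t ^ 2) (p := -α - 1)
        (Or.inl hR0.ne')).comp_hasFDerivAt x hR
    have hP : HasFDerivAt (fun z : EuclideanSpace ℝ (Fin n) => z i)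
        (EuclideanSpace.proj i : EuclideanSpace ℝ (Fin n) →L[ℝ] ℝ) x :=
      (EuclideanSpace.proj i : EuclideanSpace ℝ (Fin n) →L[ℝ] ℝ).hasFDerivAt
    have h := ((hC.mul hP).const_mul (-2 * α * t ^ s)).fderiv
    erw [h]
    simp [EuclideanSpace.inner_single_right, hA, hB]
    ring
  have hsum : t ^ (1 - s) *
      (∑ i : Fin n,
        fderiv ℝ (fun z => fderiv ℝ (fun y => genPoissonKernel n s y t) z
            (EuclideanSpace.single i 1)) x (EuclideanSpace.single i 1))
      = -2 * α * t * ((n:ℝ) * A + (-α - 1) * B * (2 * ‖x‖ ^ 2)) := by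
    have hnorm : ∑ i : Fin n, (x i) ^ 2 = ‖x‖ ^ 2 := by
      rw [EuclideanSpace.norm_eq, Real.sq_sqrt (by positivity)]
      simp [sq_abs]
    simp only [hterm]
    rw [show ∑ i : Fin n, (-2 * α * t ^ s) * (A + x i * ((-α - 1) * B * (2 * x i)))
        = ∑ i : Fin n, ((-2 * α * t ^ s) * A + ((-2 * α * t ^ s) * ((-α - 1) * B * 2)) * (x i) ^ 2)
        from Finset.sum_congr rfl fun i _ => by ring]
    rw [Finset.sum_add_distrib, Finset.sum_const, ← Finset.mul_sum, hnorm]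
    simp only [Finset.card_univ, Fintype.card_fin, nsmul_eq_mul]
    rw [show t ^ (1 - s) * ((n:ℝ) * ((-2 * α * t ^ s) * A)
          + (-2 * α * t ^ s) * ((-α - 1) * B * 2) * ‖x‖ ^ 2)
        = (t ^ (1 - s) * t ^ s) * ((n:ℝ) * (-2 * α * A)
          + (-2 * α) * ((-α - 1) * B * 2) * ‖x‖ ^ 2) from by ring, hts]
    ring
  -- time part
  have kt1 : ∀ τ : ℝ, 0 < τ → HasDerivAt (fun σ => genPoissonKernel n s x σ)
      ((s * τ ^ (s - 1)) * (‖x‖ ^ 2 + τ ^ 2) ^ (-α)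
        + τ ^ s * (-α * (‖x‖ ^ 2 + τ ^ 2) ^ (-α - 1) * (2 * τ))) τ := by
    intro τ hτ
    have hfun : (fun σ => genPoissonKernel n s x σ)
        = fun σ => σ ^ s * (‖x‖ ^ 2 + σ ^ 2) ^ (-α) := by
      funext σ
      rw [genPoissonKernel, Real.rpow_neg (by positivity), div_eq_mul_inv]
    rw [hfun]
    have h1 : HasDerivAt (fun σ : ℝ => σ ^ s) (s * τ ^ (s - 1)) τ :=
      Real.hasDerivAt_rpow_const (Or.inl hτ.ne')
    have hq : HasDerivAt (fun σ : ℝ => ‖x‖ ^ 2 + σ ^ 2) (2 * τ) τ := by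
      simpa using ((hasDerivAt_pow 2 τ).const_add (‖x‖ ^ 2))
    have h2 : HasDerivAt (fun σ : ℝ => (‖x‖ ^ 2 + σ ^ 2) ^ (-α))
        (-α * (‖x‖ ^ 2 + τ ^ 2) ^ (-α - 1) * (2 * τ)) τ := by
      have hc := (Real.hasDerivAt_rpow_const (x := ‖x‖ ^ 2 + τ ^ 2) (p := -α)
        (Or.inl (gpk_sq_pos n x hτ).ne')).comp τ hq
      exact hc
    exact h1.mul h2
  have hev : (fun τ : ℝ => τ ^ (1 - s) * deriv (fun σ => genPoissonKernel n s x σ) τ)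
      =ᶠ[nhds t] (fun τ : ℝ => s * (‖x‖ ^ 2 + τ ^ 2) ^ (-α)
        - 2 * α * τ ^ 2 * (‖x‖ ^ 2 + τ ^ 2) ^ (-α - 1)) := by
    filter_upwards [Ioi_mem_nhds ht] with τ hτ
    rw [(kt1 τ hτ).deriv]
    have h1 : τ ^ (1 - s) * τ ^ (s - 1) = 1 := by
      rw [← Real.rpow_add hτ]; norm_num
    have h2 : τ ^ (1 - s) * τ ^ s = τ := by
      rw [← Real.rpow_add hτ]; norm_num
    rw [show τ ^ (1 - s) * ((s * τ ^ (s - 1)) * (‖x‖ ^ 2 + τ ^ 2) ^ (-α)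
          + τ ^ s * (-α * (‖x‖ ^ 2 + τ ^ 2) ^ (-α - 1) * (2 * τ)))
        = (τ ^ (1 - s) * τ ^ (s - 1)) * (s * (‖x‖ ^ 2 + τ ^ 2) ^ (-α))
          + (τ ^ (1 - s) * τ ^ s) * (-α * (‖x‖ ^ 2 + τ ^ 2) ^ (-α - 1) * (2 * τ))
        from by ring, h1, h2]
    ring
  have hqt : HasDerivAt (fun τ : ℝ => ‖x‖ ^ 2 + τ ^ 2) (2 * t) t := by
    simpa using ((hasDerivAt_pow 2 t).const_add (‖x‖ ^ 2))
  have G1 : HasDerivAt (fun τ : ℝ => s * (‖x‖ ^ 2 + τ ^ 2) ^ (-α))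
      (s * (-α * A * (2 * t))) t := by
    rw [hA]
    exact ((Real.hasDerivAt_rpow_const (x := ‖x‖ ^ 2 + t ^ 2) (p := -α)
      (Or.inl hR0.ne')).comp t hqt).const_mul s
  have G2a : HasDerivAt (fun τ : ℝ => 2 * α * τ ^ 2) (2 * α * (2 * t)) t := by
    have := (hasDerivAt_pow 2 t).const_mul (2 * α)
    simpa [mul_comm, mul_assoc, mul_left_comm] using this
  have G2b : HasDerivAt (fun τ : ℝ => (‖x‖ ^ 2 + τ ^ 2) ^ (-α - 1))
      ((-α - 1) * B * (2 * t)) t := by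
    rw [hB]
    exact (Real.hasDerivAt_rpow_const (x := ‖x‖ ^ 2 + t ^ 2) (p := -α - 1)
      (Or.inl hR0.ne')).comp t hqt
  have G : HasDerivAt (fun τ : ℝ => s * (‖x‖ ^ 2 + τ ^ 2) ^ (-α)
      - 2 * α * τ ^ 2 * (‖x‖ ^ 2 + τ ^ 2) ^ (-α - 1))
      (s * (-α * A * (2 * t))
        - ((2 * α * (2 * t)) * A + (2 * α * t ^ 2) * ((-α - 1) * B * (2 * t)))) t := by
    have := G1.sub (G2a.mul G2b)
    simpa [hA, Pi.mul_def, Pi.sub_def] using this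
  have hderiv : deriv (fun τ : ℝ => τ ^ (1 - s) * deriv (fun σ => genPoissonKernel n s x σ) τ) t
      = s * (-α * A * (2 * t))
        - ((2 * α * (2 * t)) * A + (2 * α * t ^ 2) * ((-α - 1) * B * (2 * t))) := by
    rw [hev.deriv_eq, G.deriv]
  rw [hsum, hderiv, hAB, hα]
  ring
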